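/- arXiv:1403.2079 — 5 statements merged into one kernel-verified Lean document; each statement's English description precedes it below -/
import Mathlib

section
/- Let a, b, c, d, σ² > 0 with B = a·d − b·c > 0 and A = σ²·(c − a). If P₂ > A/B (interpreting the bound as P₂ > 0 when A < 0), then for all P₁ > 0, (1 + a·P₁/(b·P₂ + σ²)) / (1 + c·P₁/(d·P₂ + σ²)) > 1, i.e., user 1 achieves a positive secrecy rate. -/
/-- with B = ad − bc > 0 and P₂ above the threshold A/B
(interpreted as P₂ > 0 when A < 0), user 1 achieves a positive secrecy rate
for every P₁ > 0. -/
theorem positive_secrecy_above_threshold (a b c d σ2 P2 : ℝ)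
    (ha : 0 < a) (hb : 0 < b) (hc : 0 < c) (hd : 0 < d) (hσ : 0 < σ2)
    (hB : 0 < a * d - b * c)
    (hP2 : σ2 * (c - a) / (a * d - b * c) < P2 ∨ (σ2 * (c - a) < 0 ∧ 0 < P2))
    (hP2nn : 0 ≤ P2) :
    ∀ P1 : ℝ, 0 < P1 →
      (1 + a * P1 / (b * P2 + σ2)) / (1 + c * P1 / (d * P2 + σ2)) > 1 := by
  intro P1 hP1
  have hkey : σ2 * (c - a) < (a * d - b * c) * P2 := by
    rcases hP2 with h | ⟨h1, h2⟩
    · rw [div_lt_iff₀ hB] at h; nlinarith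
    · exact h1.trans_le (by positivity)
  have hbd : 0 < b * P2 + σ2 := by positivity
  have hdd : 0 < d * P2 + σ2 := by positivity
  have hfrac : c * P1 / (d * P2 + σ2) < a * P1 / (b * P2 + σ2) := by
    rw [div_lt_div_iff₀ hdd hbd]
    nlinarith
  have hden : 0 < 1 + c * P1 / (d * P2 + σ2) := by positivity
  rw [gt_iff_lt, lt_div_iff₀ hden]
  linarith
end

section
/- Let a, b, c, d, σ² > 0 with B = a·d − b·c < 0 and A = σ²·(c − a) < 0. If 0 < P₂ < A/B, then for all P₁ > 0, (1 + a·P₁/(b·P₂ + σ²)) / (1 + c·P₁/(d·P₂ + σ²)) > 1, i.e., a positive secrecy rate is achieved; and if P₂ > A/B the ratio is strictly less than 1. -/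
/-- with B = ad − bc < 0 and A = σ²(c−a) < 0, the secrecy rate is
positive iff 0 < P₂ < A/B, and negative when P₂ > A/B. -/
theorem secrecy_rate_both_negative_case (a b c d σ2 : ℝ)
    (ha : 0 < a) (hb : 0 < b) (hc : 0 < c) (hd : 0 < d) (hσ : 0 < σ2)
    (hB : a * d - b * c < 0) (hA : σ2 * (c - a) < 0) :
    (∀ P2 : ℝ, 0 < P2 → P2 < σ2 * (c - a) / (a * d - b * c) →
      ∀ P1 : ℝ, 0 < P1 →
        (1 + a * P1 / (b * P2 + σ2)) / (1 + c * P1 / (d * P2 + σ2)) > 1) ∧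
    (∀ P2 : ℝ, σ2 * (c - a) / (a * d - b * c) < P2 →
      ∀ P1 : ℝ, 0 < P1 →
        (1 + a * P1 / (b * P2 + σ2)) / (1 + c * P1 / (d * P2 + σ2)) < 1) := by
  constructor
  · intro P2 hP2 hlt P1 hP1
    have hD1 : 0 < b * P2 + σ2 := by positivity
    have hD2 : 0 < d * P2 + σ2 := by positivity
    have key : σ2 * (c - a) < P2 * (a * d - b * c) := by
      rwa [lt_div_iff_of_neg hB] at hlt
    rw [gt_iff_lt, lt_div_iff₀ (by positivity), one_mul]
    have h : c * P1 / (d * P2 + σ2) < a * P1 / (b * P2 + σ2) := by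
      rw [div_lt_div_iff₀ hD2 hD1]
      nlinarith [mul_pos hP1 (sub_pos.2 key)]
    linarith
  · intro P2 hlt P1 hP1
    have hP2 : 0 < P2 := lt_trans (div_pos_iff.2 (Or.inr ⟨hA, hB⟩)) hlt
    have hD1 : 0 < b * P2 + σ2 := by positivity
    have hD2 : 0 < d * P2 + σ2 := by positivity
    have key : P2 * (a * d - b * c) < σ2 * (c - a) := by
      rwa [div_lt_iff_of_neg hB] at hlt
    rw [div_lt_one (by positivity)]
    have h : a * P1 / (b * P2 + σ2) < c * P1 / (d * P2 + σ2) := by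
      rw [div_lt_div_iff₀ hD1 hD2]
      nlinarith [mul_pos hP1 (sub_pos.2 key)]
    linarith
end

section
/- Let a, b, c, d, σ² > 0 with C := b − d and D := b·(c + σ²) − d·(a + σ²) satisfying C·D < 0, and suppose E := b·c − a·d > 0. Then the quadratic N(P₂) = b·d·E·P₂² + 2·b·d·(c−a)·σ²·P₂ + σ²·(c·d·σ² − a·(b·(c+σ²) − c·d)) is strictly positive for all real P₂; hence g(P₂) = (1 + a/(bP₂+σ²))/(1 + c/(dP₂+σ²)) is strictly increasing on [0,∞), and on any compact feasibility interval [α, β] ⊆ [0,∞) its maximum is attained at the right endpoint β. -/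
/-- if C·D < 0 and E = bc − ad > 0 then N > 0 everywhere, g is
strictly increasing on [0,∞), and on any compact feasibility interval the
maximum is at the right endpoint. -/
theorem g_strict_mono_case (a b c d σ2 : ℝ)
    (ha : 0 < a) (hb : 0 < b) (hc : 0 < c) (hd : 0 < d) (hσ : 0 < σ2)
    (hCD : (b - d) * (b * (c + σ2) - d * (a + σ2)) < 0)
    (hE : 0 < b * c - a * d) :
    (∀ x : ℝ, 0 <
      b * d * (b * c - a * d) * x ^ 2 + 2 * b * d * (c - a) * σ2 * x +
        σ2 * (c * d * σ2 - a * (b * (c + σ2) - c * d))) ∧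
    StrictMonoOn (fun x : ℝ => (1 + a / (b * x + σ2)) / (1 + c / (d * x + σ2)))
      (Set.Ici 0) ∧
    (∀ α β : ℝ, 0 ≤ α → α ≤ β →
      ∀ x ∈ Set.Icc α β,
        (1 + a / (b * x + σ2)) / (1 + c / (d * x + σ2)) ≤
          (1 + a / (b * β + σ2)) / (1 + c / (d * β + σ2))) := by
  -- the hypotheses force a < c
  have hac : a < c := by
    by_contra h
    push_neg at h
    have hbd : d < b := by nlinarith
    nlinarith [mul_pos (sub_pos.mpr hbd) hE, mul_pos hσ (mul_pos (sub_pos.mpr hbd) (sub_pos.mpr hbd))]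
  have hA : 0 < b * d * (b * c - a * d) := by positivity
  have habcds : 0 < a * b * c * d * σ2 := by positivity
  -- N is positive everywhere
  have hN : ∀ x : ℝ, 0 <
      b * d * (b * c - a * d) * x ^ 2 + 2 * b * d * (c - a) * σ2 * x +
        σ2 * (c * d * σ2 - a * (b * (c + σ2) - c * d)) := by
    intro x
    nlinarith [sq_nonneg (2 * (b * d * (b * c - a * d)) * x + 2 * b * d * (c - a) * σ2),
      mul_pos habcds (neg_pos.mpr hCD), mul_pos hA hA]
  have hC : 0 < σ2 * (c * d * σ2 - a * (b * (c + σ2) - c * d)) := by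
    have := hN 0
    nlinarith [this]
  -- strict monotonicity
  have hmono : StrictMonoOn (fun x : ℝ => (1 + a / (b * x + σ2)) / (1 + c / (d * x + σ2)))
      (Set.Ici 0) := by
    intro x hx y hy hxy
    simp only [Set.mem_Ici] at hx hy
    have hbx : 0 < b * x + σ2 := by positivity
    have hby : 0 < b * y + σ2 := by positivity
    have hdx : 0 < d * x + σ2 := by positivity
    have hdy : 0 < d * y + σ2 := by positivity
    have hQ : 0 < b * d * (b * c - a * d) * (x * y) + b * d * (c - a) * σ2 * (x + y) +
        σ2 * (c * d * σ2 - a * (b * (c + σ2) - c * d)) := by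
      have h1 : 0 ≤ b * d * (b * c - a * d) * (x * y) := by positivity
      have h2 : 0 ≤ b * d * (c - a) * σ2 * (x + y) := by
        apply mul_nonneg
        · have : 0 < c - a := sub_pos.mpr hac
          positivity
        · linarith
      linarith
    have hfx : (1 + a / (b * x + σ2)) = (b * x + σ2 + a) / (b * x + σ2) := by
      field_simp
    have hfy : (1 + a / (b * y + σ2)) = (b * y + σ2 + a) / (b * y + σ2) := by
      field_simp
    have hgx : (1 + c / (d * x + σ2)) = (d * x + σ2 + c) / (d * x + σ2) := by
      field_simp
    have hgy : (1 + c / (d * y + σ2)) = (d * y + σ2 + c) / (d * y + σ2) := by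
      field_simp
    simp only [hfx, hfy, hgx, hgy]
    rw [div_lt_div_iff₀ (by positivity) (by positivity), div_mul_div_comm, div_mul_div_comm,
      div_lt_div_iff₀ (by positivity) (by positivity)]
    nlinarith [mul_pos (sub_pos.mpr hxy) hQ]
  refine ⟨hN, hmono, ?_⟩
  intro α β hα hαβ x hx
  obtain ⟨hx1, hx2⟩ := hx
  have hx0 : (0:ℝ) ≤ x := le_trans hα hx1
  have hβ0 : (0:ℝ) ≤ β := le_trans hx0 hx2
  exact hmono.monotoneOn (Set.mem_Ici.mpr hx0) (Set.mem_Ici.mpr hβ0) hx2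
end

section
/- In the egoistic scenario, the equality QoS constraint P₂·f/(P₁·g + σ²) = γ uniquely determines P₂ = γ·(P₁·g + σ²)/f, and substituting this into the secrecy-rate objective gives that user 1's secrecy rate is positive if and only if P₁·a·(b·e − c·d) > ((1+c)·d − b·(1+e))·σ², where a = g = |h_{U1,D2}|², b = |h_{U1,D1}|², c = γ·|h_{U2,D1}|²/f, d = |h_{U1,E}|², e = γ·|h_{U2,E}|²/f, and f = |h_{U2,D2}|². -/
/-- egoistic scenario: the equality QoS constraint determines P₂
uniquely, and positivity of user 1's secrecy rate after substitution is
equivalent to the stated polynomial inequality in P₁. -/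
theorem egoistic_positivity_iff (g b c d e f γ σ2 P1 : ℝ)
    (hg : 0 < g) (hb : 0 < b) (hc : 0 < c) (hd : 0 < d) (he : 0 < e)
    (hf : 0 < f) (hγ : 0 < γ) (hσ : 0 < σ2) (hP1 : 0 < P1) :
    (∀ P2 : ℝ, P2 * f / (P1 * g + σ2) = γ ↔ P2 = γ * (P1 * g + σ2) / f) ∧
    ((1 + P1 * b / (c * (P1 * g + σ2) + σ2)) /
        (1 + P1 * d / (e * (P1 * g + σ2) + σ2)) > 1 ↔
      P1 * g * (b * e - c * d) > ((1 + c) * d - b * (1 + e)) * σ2) := by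
  have hS : 0 < P1 * g + σ2 := by positivity
  have hA : 0 < c * (P1 * g + σ2) + σ2 := by positivity
  have hB : 0 < e * (P1 * g + σ2) + σ2 := by positivity
  constructor
  · intro P2
    rw [div_eq_iff hS.ne', eq_div_iff hf.ne']
  · have hden : 0 < 1 + P1 * d / (e * (P1 * g + σ2) + σ2) := by positivity
    rw [gt_iff_lt, one_lt_div hden, add_lt_add_iff_left,
      div_lt_div_iff₀ hB hA]
    constructor <;> intro h <;> nlinarith [h]
end

section
/- Let A' = ((1+c)·d − b·(1+e))·σ² and B' = a·(b·e − c·d) with a, b, c, d, e, σ² > 0. If A' > 0 and B' < 0, then no P₁ > 0 achieves a positive secrecy rate in the egoistic scenario, i.e., (1 + P₁·b/(c·(P₁·a + σ²) + σ²)) / (1 + P₁·d/(e·(P₁·a + σ²) + σ²)) ≤ 1 for all P₁ > 0. -/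
/-- egoistic scenario: if A' > 0 and B' < 0 then no P₁ > 0
achieves a positive secrecy rate. -/
theorem egoistic_no_positive_secrecy (a b c d e σ2 : ℝ)
    (ha : 0 < a) (hb : 0 < b) (hc : 0 < c) (hd : 0 < d) (he : 0 < e)
    (hσ : 0 < σ2)
    (hA' : 0 < ((1 + c) * d - b * (1 + e)) * σ2)
    (hB' : a * (b * e - c * d) < 0) :
    ∀ P1 : ℝ, 0 < P1 →
      (1 + P1 * b / (c * (P1 * a + σ2) + σ2)) /
        (1 + P1 * d / (e * (P1 * a + σ2) + σ2)) ≤ 1 := by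
  intro P1 hP1
  have hx : 0 < P1 * a + σ2 := by positivity
  have h1 : 0 < c * (P1 * a + σ2) + σ2 := by positivity
  have h2 : 0 < e * (P1 * a + σ2) + σ2 := by positivity
  have hden : 0 < 1 + P1 * d / (e * (P1 * a + σ2) + σ2) := by positivity
  rw [div_le_one hden]
  have key : P1 * b / (c * (P1 * a + σ2) + σ2) ≤
      P1 * d / (e * (P1 * a + σ2) + σ2) := by
    rw [div_le_div_iff₀ h1 h2]
    nlinarith [mul_pos (mul_pos hP1 hP1) (by linarith : (0:ℝ) < a * (c * d - b * e)), mul_pos hP1 hA']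
  linarith
end
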